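/- Let F be a field, let s ≤ n and t ≥ 1 be natural numbers, and let A_1, ..., A_D be n×n matrices over F all lying in the linear span of n×n matrices E_1, ..., E_r, each of rank at most one, where r < n + t − s. Then the family A_1, ..., A_D is not (s,t)-dimension-spreading: there exists a subspace U ⊆ F^n with dim(U) ≥ s and dim(Σ_{i=1}^D A_i(U)) < t. -/

import Mathlib

open Module Submodule

lemma aux_finrank_biInf {F V : Type*} [Field F] [AddCommGroup V] [Module F V]
    [FiniteDimensional F V] {ι : Type*} [DecidableEq ι] (S : Finset ι)
    (K : ι → Submodule F V)
    (h : ∀ i ∈ S, Module.finrank F V ≤ Module.finrank F (K i) + 1) :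
    Module.finrank F V ≤ Module.finrank F ↥(⨅ i ∈ S, K i) + S.card := by
  induction S using Finset.induction with
  | empty =>
    rw [show (⨅ i ∈ (∅ : Finset ι), K i) = ⊤ by simp, finrank_top]
    simp
  | @insert a S ha ih =>
    rw [Finset.iInf_insert]
    have h1 := Submodule.finrank_sup_add_finrank_inf_eq (K a) (⨅ i ∈ S, K i)
    have h2 : Module.finrank F ↥(K a ⊔ ⨅ i ∈ S, K i) ≤ Module.finrank F V :=
      Submodule.finrank_le _
    have h3 := ih (fun i hi => h i (Finset.mem_insert_of_mem hi))
    have h4 := h a (Finset.mem_insert_self a S)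
    rw [Finset.card_insert_of_notMem ha]
    omega

lemma aux_finrank_biSup {F V : Type*} [Field F] [AddCommGroup V] [Module F V]
    [FiniteDimensional F V] {ι : Type*} [DecidableEq ι] (S : Finset ι)
    (W : ι → Submodule F V)
    (h : ∀ i ∈ S, Module.finrank F (W i) ≤ 1) :
    Module.finrank F ↥(⨆ i ∈ S, W i) ≤ S.card := by
  induction S using Finset.induction with
  | empty => simp
  | @insert a S ha ih =>
    rw [Finset.iSup_insert]
    have h1 := Submodule.finrank_sup_add_finrank_inf_eq (W a) (⨆ i ∈ S, W i)
    have h3 := ih (fun i hi => h i (Finset.mem_insert_of_mem hi))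
    have h4 := h a (Finset.mem_insert_self a S)
    rw [Finset.card_insert_of_notMem ha]
    omega

/-- If `A₁, …, A_D` all lie in the span of `r` rank ≤ 1 matrices with `r < n + t - s`
(where `s ≤ n` and `t ≥ 1`), then the family is not `(s,t)`-dimension-spreading: some
subspace of dimension at least `s` has image sum of dimension less than `t`. -/
theorem not_dimSpreading_of_span_rank_one {F : Type*} [Field F] {D n r s t : ℕ}
    (hs : s ≤ n) (ht : 1 ≤ t)
    (E : Fin r → Matrix (Fin n) (Fin n) F)
    (hE : ∀ ℓ, (E ℓ).rank ≤ 1)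
    (A : Fin D → Matrix (Fin n) (Fin n) F)
    (hA : ∀ i, A i ∈ Submodule.span F (Set.range E))
    (hr : r + s < n + t) :
    ∃ U : Submodule F (Fin n → F),
      s ≤ Module.finrank F U ∧
      Module.finrank F ↥(⨆ i, U.map (A i).mulVecLin) < t := by
  classical
  set m := t - 1 with hm
  set S : Finset (Fin r) := Finset.univ.filter (fun ℓ => m ≤ (ℓ : ℕ)) with hS
  set S' : Finset (Fin r) := Finset.univ.filter (fun ℓ => (ℓ : ℕ) < m) with hS'
  set U : Submodule F (Fin n → F) := ⨅ ℓ ∈ S, LinearMap.ker (E ℓ).mulVecLin with hU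
  set V : Submodule F (Fin n → F) :=
    ⨆ ℓ ∈ S', LinearMap.range (E ℓ).mulVecLin with hV
  -- cardinalities
  have hcardS : S.card ≤ r - m := by
    have : S.card ≤ (Finset.Ico m r).card := by
      refine Finset.card_le_card_of_injOn (f := fun ℓ => (ℓ : ℕ)) ?_ ?_
      · intro ℓ hℓ
        rw [hS, Finset.mem_coe, Finset.mem_filter] at hℓ
        exact Finset.mem_Ico.mpr ⟨hℓ.2, ℓ.2⟩
      · intro a _ b _ hab; exact Fin.ext hab
    simpa using this
  have hcardS' : S'.card ≤ m := by
    have : S'.card ≤ (Finset.range m).card := by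
      refine Finset.card_le_card_of_injOn (f := fun ℓ => (ℓ : ℕ)) ?_ ?_
      · intro ℓ hℓ
        rw [hS', Finset.mem_coe, Finset.mem_filter] at hℓ
        exact Finset.mem_range.mpr hℓ.2
      · intro a _ b _ hab; exact Fin.ext hab
    simpa using this
  -- finrank of the ambient space
  have hfin : Module.finrank F (Fin n → F) = n := by simp
  -- dimension of U
  have hdimU : n ≤ Module.finrank F U + S.card := by
    have := aux_finrank_biInf S (fun ℓ => LinearMap.ker (E ℓ).mulVecLin) ?_
    · rw [hfin] at this; exact this
    · intro ℓ _
      have hrk := hE ℓ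
      rw [Matrix.rank] at hrk
      have h5 := LinearMap.finrank_range_add_finrank_ker (E ℓ).mulVecLin
      rw [hfin] at h5
      rw [hfin]
      show n ≤ Module.finrank F ↥(LinearMap.ker (E ℓ).mulVecLin) + 1
      omega
  -- images of U under A i lie in V
  have hmap : ∀ i, U.map (A i).mulVecLin ≤ V := by
    intro i
    rw [Submodule.map_le_iff_le_comap]
    have key : ∀ M ∈ Submodule.span F (Set.range E),
        ∀ x ∈ U, M.mulVecLin x ∈ V := by
      intro M hM
      induction hM using Submodule.span_induction with
      | mem M hMmem =>
        obtain ⟨ℓ, rfl⟩ := hMmem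
        intro x hx
        by_cases hℓ : (ℓ : ℕ) < m
        · have hℓS' : ℓ ∈ S' := by simp [hS', hℓ]
          have : (E ℓ).mulVecLin x ∈ LinearMap.range (E ℓ).mulVecLin :=
            LinearMap.mem_range_self _ x
          exact (le_biSup (fun ℓ => LinearMap.range (E ℓ).mulVecLin) hℓS') this
        · have hℓS : ℓ ∈ S := by simp [hS]; omega
          have hker : U ≤ LinearMap.ker (E ℓ).mulVecLin := biInf_le _ hℓS
          have : (E ℓ).mulVecLin x = 0 := hker hx
          rw [this]; exact V.zero_mem
      | zero => intro x _; simp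
      | add M N _ _ ihM ihN =>
        intro x hx
        have : (M + N).mulVecLin x = M.mulVecLin x + N.mulVecLin x := by
          simp [Matrix.mulVecLin, Matrix.add_mulVec]
        rw [this]
        exact V.add_mem (ihM x hx) (ihN x hx)
      | smul c M _ ihM =>
        intro x hx
        have : (c • M).mulVecLin x = c • (M.mulVecLin x) := by
          simp [Matrix.mulVecLin, Matrix.smul_mulVec]
        rw [this]
        exact V.smul_mem c (ihM x hx)
    intro x hx
    exact key (A i) (hA i) x hx
  -- dimension of V
  have hdimV : Module.finrank F V ≤ S'.card := by
    apply aux_finrank_biSup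
    intro ℓ _
    have hrk := hE ℓ
    rw [Matrix.rank] at hrk
    exact hrk
  refine ⟨U, ?_, ?_⟩
  · omega
  · have hle : (⨆ i, U.map (A i).mulVecLin) ≤ V := iSup_le hmap
    have := Submodule.finrank_mono hle
    omega
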